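/- KT regret bound: for any binary sequence x₁,...,x_t with H ones, the log-loss of the Krichevsky–Trofimov estimator exceeds the best constant-predictor log-loss by at most (1/2)log t + log 2; i.e., logQ_t ≥ H log(H/t) + (t-H) log((t-H)/t) - (1/2)log t - log 2, where logQ_t = ∑_τ (x_τ log q̂_τ + (1-x_τ)log(1-q̂_τ)) with q̂_τ = (h_{τ-1}+1/2)/τ. -/
import Mathlib

lemma log_taylor_upper (x : ℝ) (hx : 0 ≤ x) : Real.log (1+x) ≤ x - x^2/2 + x^3/3 := by
  have key : MonotoneOn (fun y : ℝ => y - y^2/2 + y^3/3 - Real.log (1+y)) (Set.Ici 0) := by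
    apply monotoneOn_of_deriv_nonneg (convex_Ici 0)
    · apply ContinuousOn.sub (by fun_prop)
      apply ContinuousOn.log (by fun_prop)
      intro y hy
      simp only [Set.mem_Ici] at hy
      positivity
    · intro y hy
      simp only [interior_Ici, Set.mem_Ioi] at hy
      have h1 : HasDerivAt (fun y : ℝ => y - y^2/2 + y^3/3 - Real.log (1+y))
          (1 - 2*y/2 + 3*y^2/3 - (1/(1+y))) y := by
        have hne : (1:ℝ) + y ≠ 0 := by positivity
        have hlog : HasDerivAt (fun y : ℝ => Real.log (1+y)) (1/(1+y)) y := by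
          simpa using (((hasDerivAt_id y).const_add (1:ℝ)).log hne)
        exact (((hasDerivAt_id y).sub ((hasDerivAt_pow 2 y).div_const 2)).add
          ((hasDerivAt_pow 3 y).div_const 3)).sub hlog |>.congr_deriv (by ring_nf)
      exact h1.differentiableAt.differentiableWithinAt
    · intro y hy
      simp only [interior_Ici, Set.mem_Ioi] at hy
      have hne : (1:ℝ) + y ≠ 0 := by positivity
      have hlog : HasDerivAt (fun y : ℝ => Real.log (1+y)) (1/(1+y)) y := by
        simpa using (((hasDerivAt_id y).const_add (1:ℝ)).log hne)
      have h1 : HasDerivAt (fun y : ℝ => y - y^2/2 + y^3/3 - Real.log (1+y))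
          (1 - 2*y/2 + 3*y^2/3 - (1/(1+y))) y := by
        exact (((hasDerivAt_id y).sub ((hasDerivAt_pow 2 y).div_const 2)).add
          ((hasDerivAt_pow 3 y).div_const 3)).sub hlog |>.congr_deriv (by ring_nf)
      rw [h1.deriv]
      have : 1 - 2*y/2 + 3*y^2/3 - 1/(1+y) = y^3/(1+y) := by
        field_simp; ring
      rw [this]; positivity
  have := key (Set.self_mem_Ici) (Set.mem_Ici.2 hx) hx
  simp only [Real.log_one] at this
  norm_num at this
  linarith

lemma log_taylor_lower (x : ℝ) (hx : 0 ≤ x) : x - x^2/2 + x^3/3 - x^4/4 ≤ Real.log (1+x) := by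
  have key : MonotoneOn (fun y : ℝ => Real.log (1+y) - (y - y^2/2 + y^3/3 - y^4/4)) (Set.Ici 0) := by
    apply monotoneOn_of_deriv_nonneg (convex_Ici 0)
    · apply ContinuousOn.sub _ (by fun_prop)
      apply ContinuousOn.log (by fun_prop)
      intro y hy
      simp only [Set.mem_Ici] at hy
      positivity
    · intro y hy
      simp only [interior_Ici, Set.mem_Ioi] at hy
      have hne : (1:ℝ) + y ≠ 0 := by positivity
      have hlog : HasDerivAt (fun y : ℝ => Real.log (1+y)) (1/(1+y)) y := by
        simpa using (((hasDerivAt_id y).const_add (1:ℝ)).log hne)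
      exact (hlog.sub ((((hasDerivAt_id y).sub ((hasDerivAt_pow 2 y).div_const 2)).add
          ((hasDerivAt_pow 3 y).div_const 3)).sub
          ((hasDerivAt_pow 4 y).div_const 4))).differentiableAt.differentiableWithinAt
    · intro y hy
      simp only [interior_Ici, Set.mem_Ioi] at hy
      have hne : (1:ℝ) + y ≠ 0 := by positivity
      have hlog : HasDerivAt (fun y : ℝ => Real.log (1+y)) (1/(1+y)) y := by
        simpa using (((hasDerivAt_id y).const_add (1:ℝ)).log hne)
      have h1 : HasDerivAt (fun y : ℝ => Real.log (1+y) - (y - y^2/2 + y^3/3 - y^4/4))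
          (1/(1+y) - (1 - 2*y/2 + 3*y^2/3 - 4*y^3/4)) y :=
        hlog.sub ((((hasDerivAt_id y).sub ((hasDerivAt_pow 2 y).div_const 2)).add
          ((hasDerivAt_pow 3 y).div_const 3)).sub
          ((hasDerivAt_pow 4 y).div_const 4)) |>.congr_deriv (by ring_nf)
      rw [h1.deriv]
      have : 1/(1+y) - (1 - 2*y/2 + 3*y^2/3 - 4*y^3/4) = y^4/(1+y) := by
        field_simp; ring
      rw [this]; positivity
  have := key (Set.self_mem_Ici) (Set.mem_Ici.2 hx) hx
  simp only [Real.log_one] at this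
  norm_num at this
  linarith


lemma log_le_one_of_le (r : ℝ) (hr : 0 < r) (h : r ≤ 2.7182818283) : Real.log r ≤ 1 := by
  have : r ≤ Real.exp 1 := le_of_lt (lt_of_le_of_lt h Real.exp_one_gt_d9)
  calc Real.log r ≤ Real.log (Real.exp 1) := Real.log_le_log hr this
    _ = 1 := Real.log_exp 1

-- (A): (t+1/2) log(1+1/t) ≥ 1 for t ≥ 1
lemma lemA (t : ℕ) (ht : 1 ≤ t) : 1 ≤ ((t:ℝ) + 1/2) * Real.log (1 + 1/t) := by
  have ht0 : (0:ℝ) < t := by exact_mod_cast ht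
  rcases eq_or_lt_of_le ht with h1 | h2
  · -- t = 1 : (3/2) log 2 ≥ 1
    have : (t:ℝ) = 1 := by exact_mod_cast h1.symm
    rw [this]
    norm_num
    -- 1 ≤ 3/2 * log 2  ⟺  2/3 ≤ log 2 ⟺ exp(2/3) ≤ 2; use exp 1 < e bound: 2 ≤ 3 log 2 ⟺ e^2 ≤ 8
    have h8 : Real.exp 1 ^ 2 < 8 := by
      have := Real.exp_one_lt_d9
      nlinarith [Real.exp_pos 1]
    have : Real.exp (2/3 : ℝ) < 2 := by
      have h23 : Real.exp (2/3 : ℝ) ^ 3 = Real.exp 2 := by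
        rw [← Real.exp_nat_mul]; norm_num
      have he2 : Real.exp 2 < 8 := by
        have : Real.exp 2 = Real.exp 1 ^ 2 := by rw [← Real.exp_nat_mul]; norm_num
        linarith
      nlinarith [Real.exp_pos (2/3 : ℝ), sq_nonneg (Real.exp (2/3 : ℝ) + 2), sq_nonneg (Real.exp (2/3 : ℝ) - 2)]
    have h2' : (2/3 : ℝ) < Real.log 2 := by
      have := Real.log_lt_log (Real.exp_pos (2/3:ℝ)) this
      rwa [Real.log_exp] at this
    linarith
  · -- t ≥ 2
    have ht2 : (2:ℝ) ≤ t := by exact_mod_cast h2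
    set u : ℝ := 1/t with hu
    have hu0 : 0 ≤ u := by positivity
    have hl := log_taylor_lower u hu0
    have hpoly : 1 ≤ ((t:ℝ) + 1/2) * (u - u^2/2 + u^3/3 - u^4/4) := by
      rw [hu]
      rw [div_pow, div_pow, div_pow]
      have h24 : (0:ℝ) < t^4 := by positivity
      rw [← sub_nonneg]
      have : ((t:ℝ) + 1/2) * (1/t - 1^2/t^2/2 + 1^3/t^3/3 - 1^4/t^4/4) - 1
          = (2*(t:ℝ)^2 - 2*t - 3) / (24 * t^4) := by
        field_simp
        ring
      rw [this]
      apply div_nonneg _ (by positivity)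
      nlinarith
    calc (1:ℝ) ≤ ((t:ℝ) + 1/2) * (u - u^2/2 + u^3/3 - u^4/4) := hpoly
      _ ≤ ((t:ℝ) + 1/2) * Real.log (1 + u) := by
          apply mul_le_mul_of_nonneg_left hl (by positivity)

lemma B_small (a b : ℝ) (n : ℕ) (ha : 0 < a) (hb : 0 < b)
    (h : a^n * b ≤ 2.7182818283) : (n:ℝ) * Real.log a + Real.log b ≤ 1 := by
  rw [← Real.log_pow, ← Real.log_mul (by positivity) hb.ne']
  exact log_le_one_of_le _ (by positivity) h

lemma lemB (H : ℕ) (hH : 1 ≤ H) :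
    (H:ℝ) * Real.log (1 + 1/H) + Real.log (1 + 1/(2*H+1)) ≤ 1 := by
  rcases le_or_gt H 6 with h6 | h7
  · interval_cases H
    · have := B_small 2 (4/3) 1 (by norm_num) (by norm_num) (by norm_num)
      norm_num at this ⊢; linarith
    · have := B_small (3/2) (6/5) 2 (by norm_num) (by norm_num) (by norm_num)
      norm_num at this ⊢; linarith
    · have := B_small (4/3) (8/7) 3 (by norm_num) (by norm_num) (by norm_num)
      norm_num at this ⊢; linarith
    · have := B_small (5/4) (10/9) 4 (by norm_num) (by norm_num) (by norm_num)
      norm_num at this ⊢; linarith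
    · have := B_small (6/5) (12/11) 5 (by norm_num) (by norm_num) (by norm_num)
      norm_num at this ⊢; linarith
    · have := B_small (7/6) (14/13) 6 (by norm_num) (by norm_num) (by norm_num)
      norm_num at this ⊢; linarith
  · have hH0 : (0:ℝ) < H := by exact_mod_cast hH
    have hH7 : (7:ℝ) ≤ H := by exact_mod_cast h7
    have h1 := log_taylor_upper (1/H) (by positivity)
    have h2 := log_taylor_upper (1/(2*(H:ℝ)+1)) (by positivity)
    have key : (H:ℝ) * (1/H - (1/H)^2/2 + (1/H)^3/3)
        + (1/(2*(H:ℝ)+1) - (1/(2*(H:ℝ)+1))^2/2 + (1/(2*(H:ℝ)+1))^3/3) ≤ 1 := by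
      rw [← sub_nonneg]
      have hne : (2*(H:ℝ)+1) > 0 := by positivity
      have : 1 - ((H:ℝ) * (1/H - (1/H)^2/2 + (1/H)^3/3)
          + (1/(2*(H:ℝ)+1) - (1/(2*(H:ℝ)+1))^2/2 + (1/(2*(H:ℝ)+1))^3/3))
          = (2*(H:ℝ)^3 - 11*H^2 - 9*H - 2) / (6 * H^2 * (2*H+1)^3) := by
        field_simp
        ring
      rw [this]
      apply div_nonneg _ (by positivity)
      nlinarith [hH7, sq_nonneg ((H:ℝ) - 7)]
    have m1 : (H:ℝ) * Real.log (1 + 1/H) ≤ (H:ℝ) * (1/H - (1/H)^2/2 + (1/H)^3/3) :=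
      mul_le_mul_of_nonneg_left h1 (by positivity)
    have : (2:ℝ)*(H:ℕ)+1 = ((2*H+1 : ℕ):ℝ) := by push_cast; ring
    linarith [h2, m1, key]

lemma cast_pow_pos (H : ℕ) : (0:ℝ) < (H:ℝ)^H := by
  rcases Nat.eq_zero_or_pos H with h | h
  · simp [h]
  · exact pow_pos (by exact_mod_cast h) _

lemma step_ineq (H t : ℕ) (ht : 1 ≤ t) :
    ((H:ℝ)+1)^(H+1) * Real.sqrt t * (t:ℝ)^t
      ≤ Real.sqrt (t+1) * ((t:ℝ)+1)^t * ((H:ℝ)+1/2) * (H:ℝ)^H := by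
  have ht0 : (0:ℝ) < t := by exact_mod_cast ht
  have ht1 : (0:ℝ) < (t:ℝ)+1 := by positivity
  have hHp := cast_pow_pos H
  have hst : (0:ℝ) < Real.sqrt t := Real.sqrt_pos.2 ht0
  have hst1 : (0:ℝ) < Real.sqrt ((t:ℝ)+1) := Real.sqrt_pos.2 ht1
  have hL : (0:ℝ) < ((H:ℝ)+1)^(H+1) * Real.sqrt t * (t:ℝ)^t := by positivity
  have hR : (0:ℝ) < Real.sqrt ((t:ℝ)+1) * ((t:ℝ)+1)^t * ((H:ℝ)+1/2) * (H:ℝ)^H := by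
    positivity
  rw [← Real.log_le_log_iff hL hR]
  have e1 : Real.log (((H:ℝ)+1)^(H+1) * Real.sqrt t * (t:ℝ)^t)
      = ((H:ℕ)+1 : ℝ) * Real.log ((H:ℝ)+1) + (1/2) * Real.log t + (t:ℝ) * Real.log t := by
    rw [Real.log_mul (by positivity) (by positivity), Real.log_mul (by positivity) hst.ne',
      Real.log_pow, Real.log_pow, Real.log_sqrt ht0.le]
    push_cast; ring
  have e2 : Real.log (Real.sqrt ((t:ℝ)+1) * ((t:ℝ)+1)^t * ((H:ℝ)+1/2) * (H:ℝ)^H)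
      = (1/2) * Real.log ((t:ℝ)+1) + (t:ℝ) * Real.log ((t:ℝ)+1)
        + Real.log ((H:ℝ)+1/2) + (H:ℝ) * Real.log H := by
    rw [Real.log_mul (by positivity) hHp.ne', Real.log_mul (by positivity) (by positivity),
      Real.log_mul hst1.ne' (by positivity), Real.log_pow, Real.log_pow,
      Real.log_sqrt ht1.le]
    ring
  rw [e1, e2]
  have hA : 1 ≤ ((t:ℝ) + 1/2) * (Real.log ((t:ℝ)+1) - Real.log t) := by
    have := lemA t ht
    have hrw : (1:ℝ) + 1/t = ((t:ℝ)+1)/t := by field_simp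
    rwa [hrw, Real.log_div ht1.ne' ht0.ne'] at this
  rcases Nat.eq_zero_or_pos H with hH0 | hH1
  · subst hH0
    have hlog2 : Real.log 2 ≤ 1 := log_le_one_of_le 2 (by norm_num) (by norm_num)
    have : Real.log ((0:ℕ) + 1/2 : ℝ) = - Real.log 2 := by
      norm_num
      rw [← Real.log_inv]; norm_num
    push_cast
    push_cast at this
    rw [this]
    norm_num [Real.log_zero, Real.log_one]
    nlinarith [hA, hlog2]
  · have hH0 : (0:ℝ) < H := by exact_mod_cast hH1
    have hB := lemB H hH1
    have hb1 : (1:ℝ) + 1/H = ((H:ℝ)+1)/H := by field_simp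
    have hb2 : (1:ℝ) + 1/(2*(H:ℝ)+1) = ((H:ℝ)+1)/((H:ℝ)+1/2) := by
      field_simp; ring
    rw [hb1, hb2, Real.log_div (by positivity) hH0.ne',
      Real.log_div (by positivity) (by positivity)] at hB
    nlinarith [hA, hB]

noncomputable def ktA : ℕ → ℝ := fun k => ∏ i ∈ Finset.range k, ((i:ℝ) + 1/2)

lemma ktA_pos (k : ℕ) : 0 < ktA k := by
  apply Finset.prod_pos; intro i _; positivity

lemma ktA_succ (k : ℕ) : ktA (k+1) = ktA k * ((k:ℝ) + 1/2) :=
  Finset.prod_range_succ _ _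

def KTstmt (H m : ℕ) : Prop :=
  (H:ℝ)^H * (m:ℝ)^m * (Nat.factorial (H+m) : ℝ)
    ≤ 2 * Real.sqrt ((H:ℝ)+m) * ((H:ℝ)+m)^(H+m) * ktA H * ktA m

lemma KTstmt_comm (H m : ℕ) (h : KTstmt H m) : KTstmt m H := by
  unfold KTstmt at h ⊢
  rw [Nat.add_comm m H, add_comm (m:ℝ) (H:ℝ)]
  calc (m:ℝ)^m * (H:ℝ)^H * (Nat.factorial (H+m) : ℝ)
      = (H:ℝ)^H * (m:ℝ)^m * (Nat.factorial (H+m) : ℝ) := by ring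
    _ ≤ 2 * Real.sqrt ((H:ℝ)+m) * ((H:ℝ)+m)^(H+m) * ktA H * ktA m := h
    _ = 2 * Real.sqrt ((H:ℝ)+m) * ((H:ℝ)+m)^(H+m) * ktA m * ktA H := by ring

lemma KTstmt_step (H m : ℕ) (ht : 1 ≤ H + m) (IH : KTstmt H m) : KTstmt (H+1) m := by
  unfold KTstmt at IH ⊢
  set t : ℕ := H + m with htdef
  have hcast1 : ((H:ℝ)+1) + m = (t:ℝ) + 1 := by push_cast [htdef]; ring
  have hexp : (H+1) + m = t + 1 := by omega
  push_cast
  rw [show ((H:ℝ)+1+m) = (t:ℝ)+1 by push_cast [htdef]; ring]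
  rw [hexp]
  have hfact : (Nat.factorial (t+1) : ℝ) = ((t:ℝ)+1) * (Nat.factorial t : ℝ) := by
    rw [Nat.factorial_succ]; push_cast; ring
  rw [hfact, pow_succ, ktA_succ]
  -- goal: (H+1)^(H+1) * m^m * ((t+1) * t!) ≤ 2 * √(t+1) * ((t+1)^t * (t+1)) * (ktA H * (H+1/2)) * ktA m
  have ht0 : (0:ℝ) < t := by exact_mod_cast ht
  have hsT : (0:ℝ) < Real.sqrt t * (t:ℝ)^t := by positivity
  have hIH' : (H:ℝ)^H * (m:ℝ)^m * (Nat.factorial t : ℝ)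
      ≤ 2 * Real.sqrt t * (t:ℝ)^t * ktA H * ktA m := by
    have : (H:ℝ) + m = (t:ℝ) := by push_cast [htdef]; ring
    rwa [this] at IH
  have hstep := step_ineq H t ht
  apply le_of_mul_le_mul_right _ hsT
  calc ((H:ℝ)+1)^(H+1) * (m:ℝ)^m * (((t:ℝ)+1) * (Nat.factorial t : ℝ))
        * (Real.sqrt t * (t:ℝ)^t)
      = (((H:ℝ)+1)^(H+1) * Real.sqrt t * (t:ℝ)^t)
          * ((m:ℝ)^m * (Nat.factorial t : ℝ) * ((t:ℝ)+1)) := by ring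
    _ ≤ (Real.sqrt ((t:ℝ)+1) * ((t:ℝ)+1)^t * ((H:ℝ)+1/2) * (H:ℝ)^H)
          * ((m:ℝ)^m * (Nat.factorial t : ℝ) * ((t:ℝ)+1)) := by
        apply mul_le_mul_of_nonneg_right _ (by positivity)
        exact hstep
    _ = (Real.sqrt ((t:ℝ)+1) * ((t:ℝ)+1)^t * ((H:ℝ)+1/2) * ((t:ℝ)+1))
          * ((H:ℝ)^H * (m:ℝ)^m * (Nat.factorial t : ℝ)) := by ring
    _ ≤ (Real.sqrt ((t:ℝ)+1) * ((t:ℝ)+1)^t * ((H:ℝ)+1/2) * ((t:ℝ)+1))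
          * (2 * Real.sqrt t * (t:ℝ)^t * ktA H * ktA m) := by
        apply mul_le_mul_of_nonneg_left hIH' (by positivity)
    _ = 2 * Real.sqrt ((t:ℝ)+1) * (((t:ℝ)+1)^t * ((t:ℝ)+1)) * (ktA H * ((H:ℝ)+1/2)) * ktA m
          * (Real.sqrt t * (t:ℝ)^t) := by ring

lemma keyC : ∀ n (H m : ℕ), H + m = n → 1 ≤ n → KTstmt H m := by
  intro n
  induction n with
  | zero => intro H m _ h; omega
  | succ n ih =>
    intro H m hn hpos
    rcases Nat.eq_zero_or_pos n with hn0 | hn1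
    · subst hn0
      -- H + m = 1
      have hHle : H ≤ 1 := by omega
      interval_cases H
      · have hm : m = 1 := by omega
        subst hm
        unfold KTstmt
        simp [ktA, Finset.prod_range_succ]
      · have hm : m = 0 := by omega
        subst hm
        unfold KTstmt
        simp [ktA, Finset.prod_range_succ]
    · rcases Nat.eq_zero_or_pos H with hH0 | hH1
      · subst hH0
        obtain ⟨m', rfl⟩ : ∃ m', m = m' + 1 := ⟨m-1, by omega⟩
        apply KTstmt_comm
        exact KTstmt_step m' 0 (by omega) (ih m' 0 (by omega) (by omega))
      · obtain ⟨H', rfl⟩ : ∃ H', H = H' + 1 := ⟨H-1, by omega⟩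
        exact KTstmt_step H' m (by omega) (ih H' m (by omega) (by omega))

lemma telescope (x : ℕ → ℝ) (hx : ∀ τ, x τ = 0 ∨ x τ = 1) (n : ℕ) :
    ∃ N : ℕ, N ≤ n ∧ (∑ s ∈ Finset.range n, x s) = N ∧
    (∑ τ ∈ Finset.range n,
        (x τ * Real.log (((∑ s ∈ Finset.range τ, x s) + 1/2)/((τ:ℝ)+1))
          + (1 - x τ) * Real.log (1 - ((∑ s ∈ Finset.range τ, x s) + 1/2)/((τ:ℝ)+1))))
    = Real.log (ktA N) + Real.log (ktA (n - N)) - Real.log (Nat.factorial n) := by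
  induction n with
  | zero =>
    exact ⟨0, le_refl 0, by simp, by simp [ktA]⟩
  | succ n ih =>
    obtain ⟨N, hNn, hsum, heq⟩ := ih
    have hn1 : (0:ℝ) < (n:ℝ) + 1 := by positivity
    have hfact : Real.log (Nat.factorial (n+1) : ℝ)
        = Real.log ((n:ℝ)+1) + Real.log (Nat.factorial n : ℝ) := by
      rw [Nat.factorial_succ]
      push_cast
      rw [Real.log_mul (by positivity) (by positivity : (0:ℝ) < (Nat.factorial n : ℝ)).ne']
    rw [Finset.sum_range_succ, Finset.sum_range_succ]
    rcases hx n with h0 | h1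
    · -- x n = 0
      refine ⟨N, by omega, by rw [h0, hsum]; ring, ?_⟩
      set k : ℕ := n - N with hk
      have hnN : (n:ℝ) - N = (k:ℝ) := by
        rw [hk]; push_cast [Nat.cast_sub hNn]; ring
      have harg : 1 - ((∑ s ∈ Finset.range n, x s) + 1/2)/((n:ℝ)+1)
          = ((k:ℝ) + 1/2)/((n:ℝ)+1) := by
        rw [hsum]
        field_simp
        linarith [hnN]
      have hsub : n + 1 - N = k + 1 := by omega
      have hld : Real.log (((k:ℝ)+1/2)/((n:ℝ)+1))
          = Real.log ((k:ℝ)+1/2) - Real.log ((n:ℝ)+1) :=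
        Real.log_div (by positivity) hn1.ne'
      have hlm : Real.log (ktA k * ((k:ℝ)+1/2))
          = Real.log (ktA k) + Real.log ((k:ℝ)+1/2) :=
        Real.log_mul (ktA_pos k).ne' (by positivity)
      rw [h0, harg, hsub, ktA_succ, heq, hfact, hld, hlm]
      ring
    · -- x n = 1
      refine ⟨N+1, by omega, by rw [h1, hsum]; push_cast; ring, ?_⟩
      have harg : ((∑ s ∈ Finset.range n, x s) + 1/2)/((n:ℝ)+1)
          = ((N:ℝ) + 1/2)/((n:ℝ)+1) := by rw [hsum]
      have hsub : n + 1 - (N+1) = n - N := by omega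
      have hld : Real.log (((N:ℝ)+1/2)/((n:ℝ)+1))
          = Real.log ((N:ℝ)+1/2) - Real.log ((n:ℝ)+1) :=
        Real.log_div (by positivity) hn1.ne'
      have hlm : Real.log (ktA N * ((N:ℝ)+1/2))
          = Real.log (ktA N) + Real.log ((N:ℝ)+1/2) :=
        Real.log_mul (ktA_pos N).ne' (by positivity)
      rw [h1, harg, hsub, ktA_succ, heq, hfact, hld, hlm]
      ring

lemma mul_log_div_cast (a t : ℕ) (ht : 0 < t) :
    (a:ℝ) * Real.log ((a:ℝ)/(t:ℝ)) = (a:ℝ) * Real.log a - (a:ℝ) * Real.log t := by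
  rcases Nat.eq_zero_or_pos a with h | h
  · subst h; simp
  · have ha : (0:ℝ) < a := by exact_mod_cast h
    have ht' : (0:ℝ) < t := by exact_mod_cast ht
    rw [Real.log_div ha.ne' ht'.ne']
    ring

/-- KT regret bound: for any binary sequence `x₀,...,x_{t-1}` with `H` ones,
the log-loss of the Krichevsky–Trofimov estimator exceeds the best constant-predictor
log-loss by at most `(1/2)log t + log 2`; i.e.
`logQ_t ≥ H log(H/t) + (t-H) log((t-H)/t) - (1/2)log t - log 2`, where
`logQ_t = ∑_τ (x_τ log q̂_τ + (1-x_τ)log(1-q̂_τ))` with `q̂_τ = (∑_{s<τ} x_s + 1/2)/(τ+1)`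
(0-indexed). Terms with `H = 0` or `H = t` use the convention `0·log 0 = 0`, which holds
automatically since `Real.log 0 = 0`. -/
theorem kt_regret_bound (t : ℕ) (ht : 1 ≤ t) (x : ℕ → ℝ) (hx : ∀ τ, x τ = 0 ∨ x τ = 1) :
    (∑ τ ∈ Finset.range t, x τ) * Real.log ((∑ τ ∈ Finset.range t, x τ) / t)
      + ((t : ℝ) - ∑ τ ∈ Finset.range t, x τ)
          * Real.log (((t : ℝ) - ∑ τ ∈ Finset.range t, x τ) / t)
      - (1 / 2) * Real.log t - Real.log 2
    ≤ ∑ τ ∈ Finset.range t,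
        (x τ * Real.log (((∑ s ∈ Finset.range τ, x s) + 1 / 2) / (τ + 1))
          + (1 - x τ) * Real.log (1 - ((∑ s ∈ Finset.range τ, x s) + 1 / 2) / (τ + 1))) := by
  obtain ⟨N, hNt, hsum, heq⟩ := telescope x hx t
  set m : ℕ := t - N with hm
  have htm : N + m = t := by omega
  have hcast : (t:ℝ) - (N:ℝ) = (m:ℝ) := by
    rw [hm]; push_cast [Nat.cast_sub hNt]; ring
  have key := keyC (N+m) N m rfl (by omega)
  unfold KTstmt at key
  rw [htm] at key
  have hct : ((N:ℝ) + (m:ℝ)) = (t:ℝ) := by push_cast [← htm]; ring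
  rw [hct] at key
  -- positivity
  have ht0 : (0:ℝ) < t := by exact_mod_cast ht
  have hNp := cast_pow_pos N
  have hmp := cast_pow_pos m
  have hfp : (0:ℝ) < (Nat.factorial t : ℝ) := by exact_mod_cast t.factorial_pos
  have hLp : (0:ℝ) < (N:ℝ)^N * (m:ℝ)^m * (Nat.factorial t : ℝ) := by positivity
  have hlog := Real.log_le_log hLp key
  have eL : Real.log ((N:ℝ)^N * (m:ℝ)^m * (Nat.factorial t : ℝ))
      = (N:ℝ) * Real.log N + (m:ℝ) * Real.log m + Real.log (Nat.factorial t : ℝ) := by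
    rw [Real.log_mul (mul_pos hNp hmp).ne' hfp.ne', Real.log_mul hNp.ne' hmp.ne',
      Real.log_pow, Real.log_pow]
  have eR : Real.log (2 * Real.sqrt ((t:ℝ)) * ((t:ℝ))^t * ktA N * ktA m)
      = Real.log 2 + (1/2) * Real.log t + (t:ℝ) * Real.log t
        + Real.log (ktA N) + Real.log (ktA m) := by
    have hsp : (0:ℝ) < Real.sqrt t := Real.sqrt_pos.2 ht0
    have hbase : (0:ℝ) < 2 * Real.sqrt t * (t:ℝ)^t := by positivity
    rw [Real.log_mul (mul_pos hbase (ktA_pos N)).ne' (ktA_pos m).ne',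
      Real.log_mul hbase.ne' (ktA_pos N).ne',
      Real.log_mul (by positivity) (by positivity : (0:ℝ) < (t:ℝ)^t).ne',
      Real.log_mul (by norm_num) hsp.ne', Real.log_pow, Real.log_sqrt ht0.le]
    ring
  rw [eL, eR] at hlog
  rw [heq, hsum, hcast]
  rw [mul_log_div_cast N t ht, mul_log_div_cast m t ht]
  have hts : (t:ℝ) * Real.log t = (N:ℝ) * Real.log t + (m:ℝ) * Real.log t := by
    rw [← hct]; ring
  linarith [hlog, hts]
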